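/- Let W and Ŵ be independent Gamma random variables with positive integer shapes m, m̂ and scales Ω, Ω̂. Then for s < 0, the moment generating function M(s) = E[e^{s W Ŵ}] equals (e^{−1/(2sΩΩ̂)} / (−sΩΩ̂)^{(m+m̂−1)/2}) · W_{−(m+m̂−1)/2, (m−m̂)/2}(−1/(sΩΩ̂)), where W_{a,b} is the Whittaker function. -/

import Mathlib

open MeasureTheory ProbabilityTheory Real Set

open scoped NNReal ENNReal

lemma gamma_integral_eq {a r : ℝ} (ha : 0 < a) (hr : 0 < r) (g : ℝ → ℝ) :
    ∫ y, g y ∂(gammaMeasure a r)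
      = ∫ y in Ioi (0:ℝ), (r ^ a / Real.Gamma a * y ^ (a - 1) * Real.exp (-(r * y))) * g y := by
  have h : (gammaPDF a r) = fun x => ((Real.toNNReal (gammaPDFReal a r x) : ℝ≥0) : ℝ≥0∞) := rfl
  rw [gammaMeasure, h,
    integral_withDensity_eq_integral_smul ((measurable_gammaPDFReal a r).real_toNNReal)]
  have h2 : ∀ y, (Real.toNNReal (gammaPDFReal a r y) : ℝ≥0) • g y
      = gammaPDFReal a r y * g y := by
    intro y
    simp [NNReal.smul_def, Real.coe_toNNReal _ (gammaPDFReal_nonneg ha hr y)]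
  simp_rw [h2]
  rw [← setIntegral_eq_integral_of_forall_compl_eq_zero (s := Ici (0:ℝ))
    (fun x hx => by
      rw [gammaPDFReal, if_neg (by simpa using hx), zero_mul]),
    integral_Ici_eq_integral_Ioi]
  refine setIntegral_congr_fun measurableSet_Ioi (fun y hy => ?_)
  rw [gammaPDFReal, if_pos (le_of_lt hy)]

lemma gamma_mgf {a r u : ℝ} (ha : 0 < a) (hr : 0 < r) (hu : u ≤ 0) :
    ∫ y, Real.exp (u * y) ∂(gammaMeasure a r) = (r / (r - u)) ^ a := by
  have hru : 0 < r - u := by linarith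
  rw [gamma_integral_eq ha hr]
  have hpt : ∀ y ∈ Ioi (0:ℝ),
      (r ^ a / Real.Gamma a * y ^ (a - 1) * Real.exp (-(r * y))) * Real.exp (u * y)
        = r ^ a / Real.Gamma a * (y ^ (a - 1) * Real.exp (-((r - u) * y))) := by
    intro y _
    have hE : Real.exp (-(r * y)) * Real.exp (u * y) = Real.exp (-((r - u) * y)) := by
      rw [← Real.exp_add]; congr 1; ring
    rw [mul_assoc, hE, mul_assoc]
  rw [setIntegral_congr_fun measurableSet_Ioi hpt, integral_const_mul,
    integral_rpow_mul_exp_neg_mul_Ioi ha hru, div_rpow hr.le hru.le,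
    one_div, Real.inv_rpow hru.le]
  have hΓ : Real.Gamma a ≠ 0 := (Real.Gamma_pos_of_pos ha).ne'
  field_simp

lemma subs_Ioi {p q z k : ℝ} (hk : 0 < k) :
    ∫ x in Ioi (0:ℝ), (k*x)^p * (1+k*x)^q * Real.exp (-z*(k*x))
      = k⁻¹ * ∫ t in Ioi (0:ℝ), t^p * (1+t)^q * Real.exp (-z*t) := by
  have := integral_comp_mul_left_Ioi
    (fun t => t^p * (1+t)^q * Real.exp (-z*t)) 0 hk
  simpa [mul_zero, smul_eq_mul] using this

lemma integrable_exp_prod {a₁ r₁ a₂ r₂ s : ℝ} (h1 : 0 < a₁) (h2 : 0 < r₁)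
    (h3 : 0 < a₂) (h4 : 0 < r₂) (hs : s ≤ 0) :
    Integrable (fun p : ℝ × ℝ => Real.exp (s * (p.1 * p.2)))
      ((gammaMeasure a₁ r₁).prod (gammaMeasure a₂ r₂)) := by
  haveI i1 : IsProbabilityMeasure (gammaMeasure a₁ r₁) := isProbabilityMeasure_gammaMeasure h1 h2
  haveI i2 : IsProbabilityMeasure (gammaMeasure a₂ r₂) := isProbabilityMeasure_gammaMeasure h3 h4
  have hμ1 : gammaMeasure a₁ r₁ (Iio 0) = 0 := by
    rw [gammaMeasure, withDensity_apply _ measurableSet_Iio]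
    exact lintegral_gammaPDF_of_nonpos le_rfl
  have hμ2 : gammaMeasure a₂ r₂ (Iio 0) = 0 := by
    rw [gammaMeasure, withDensity_apply _ measurableSet_Iio]
    exact lintegral_gammaPDF_of_nonpos le_rfl
  have hae : ∀ᵐ p ∂((gammaMeasure a₁ r₁).prod (gammaMeasure a₂ r₂)),
      0 ≤ p.1 ∧ 0 ≤ p.2 := by
    rw [ae_iff]
    refine measure_mono_null (t := (Iio 0) ×ˢ (univ : Set ℝ) ∪ (univ : Set ℝ) ×ˢ (Iio 0))
      (fun p hp => ?_) ?_
    · simp only [mem_setOf_eq, not_and_or, not_le] at hp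
      rcases hp with h | h
      · exact Or.inl ⟨h, mem_univ _⟩
      · exact Or.inr ⟨mem_univ _, h⟩
    · refine measure_union_null ?_ ?_
      · rw [Measure.prod_prod, hμ1, zero_mul]
      · rw [Measure.prod_prod, hμ2, mul_zero]
  refine Integrable.mono' (integrable_const 1) ?_ ?_
  · exact (((measurable_fst.mul measurable_snd).const_mul s).exp).aestronglyMeasurable
  · filter_upwards [hae] with p hp
    rw [Real.norm_eq_abs, Real.abs_exp]
    exact Real.exp_le_one_iff.mpr (mul_nonpos_of_nonpos_of_nonneg hs (mul_nonneg hp.1 hp.2))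

lemma alg_aux {P G K X A E : ℝ} (hK : K ≠ 0) :
    P / G * X * E * A = P / G * K⁻¹ * (K * X * A * E) := by
  have h : P / G * K⁻¹ * (K * X * A * E) = P / G * (K⁻¹ * K) * (X * A * E) := by ring
  rw [h, inv_mul_cancel₀ hK, mul_one]
  ring


set_option maxHeartbeats 1000000

/-- Tricomi confluent hypergeometric function `U(a,b,z)`, via its integral
representation for `a > 0`, `z > 0`. -/
noncomputable def tricomiU (a b z : ℝ) : ℝ :=
  (1 / Real.Gamma a) *
    ∫ t in Ioi (0 : ℝ), t ^ (a - 1) * (1 + t) ^ (b - a - 1) * Real.exp (-z * t)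

/-- Whittaker `W` function, expressed through the Tricomi function:
`W_{a,b}(z) = e^{-z/2} z^{b+1/2} U(b-a+1/2, 1+2b, z)`. -/
noncomputable def whittakerW (a b z : ℝ) : ℝ :=
  Real.exp (-z / 2) * z ^ (b + 1 / 2) * tricomiU (b - a + 1 / 2) (1 + 2 * b) z

/-- MGF of the product of two independent Gamma random variables, for `s < 0`. -/
theorem product_gamma_mgf
    {α : Type*} [MeasurableSpace α] (μ : Measure α) [IsProbabilityMeasure μ]
    (W V : α → ℝ) (hWm : Measurable W) (hVm : Measurable V)
    (m mh : ℕ) (hm : 0 < m) (hmh : 0 < mh)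
    (Ω₁ Ω₂ : ℝ) (hΩ₁ : 0 < Ω₁) (hΩ₂ : 0 < Ω₂)
    (hW : μ.map W = gammaMeasure m (1 / Ω₁))
    (hV : μ.map V = gammaMeasure mh (1 / Ω₂))
    (hindep : IndepFun W V μ)
    (s : ℝ) (hs : s < 0) :
    ∫ ω, Real.exp (s * (W ω * V ω)) ∂μ =
      Real.exp (-1 / (2 * s * Ω₁ * Ω₂)) / (-(s * Ω₁ * Ω₂)) ^ (((m : ℝ) + mh - 1) / 2) *
        whittakerW (-(((m : ℝ) + mh - 1) / 2)) (((m : ℝ) - mh) / 2)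
          (-(1 / (s * Ω₁ * Ω₂))) := by
  have hm' : (0:ℝ) < m := by exact_mod_cast hm
  have hmh' : (0:ℝ) < mh := by exact_mod_cast hmh
  have hr₁ : (0:ℝ) < 1/Ω₁ := by positivity
  have hr₂ : (0:ℝ) < 1/Ω₂ := by positivity
  have hΓ : (0:ℝ) < Real.Gamma m := Real.Gamma_pos_of_pos hm'
  set k : ℝ := -(s*Ω₂) with hk_def
  clear_value k
  have hk : 0 < k := by rw [hk_def]; nlinarith
  set c : ℝ := -(s * Ω₁ * Ω₂) with hc_def
  clear_value c
  have hc : 0 < c := by rw [hc_def]; nlinarith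
  set z : ℝ := -(1 / (s * Ω₁ * Ω₂)) with hz_def
  clear_value z
  haveI i1 : IsProbabilityMeasure (gammaMeasure (m:ℝ) (1/Ω₁)) := isProbabilityMeasure_gammaMeasure hm' hr₁
  haveI i2 : IsProbabilityMeasure (gammaMeasure (mh:ℝ) (1/Ω₂)) := isProbabilityMeasure_gammaMeasure hmh' hr₂
  have hz : z = c⁻¹ := by
    rw [hz_def, hc_def, one_div, inv_neg]
  have hzpos : 0 < z := by rw [hz]; positivity
  -- step 1 : joint law
  have hmap : μ.map (fun ω => (W ω, V ω))
      = (gammaMeasure (m:ℝ) (1/Ω₁)).prod (gammaMeasure (mh:ℝ) (1/Ω₂)) := by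
    rw [← hW, ← hV]
    exact (indepFun_iff_map_prod_eq_prod_map_map hWm.aemeasurable hVm.aemeasurable).mp hindep
  have hcont : Continuous (fun p : ℝ × ℝ => Real.exp (s * (p.1 * p.2))) := by fun_prop
  have step1 : ∫ ω, Real.exp (s * (W ω * V ω)) ∂μ
      = ∫ p : ℝ × ℝ, Real.exp (s * (p.1 * p.2))
          ∂((gammaMeasure (m:ℝ) (1/Ω₁)).prod (gammaMeasure (mh:ℝ) (1/Ω₂))) := by
    rw [← hmap, integral_map (hWm.prodMk hVm).aemeasurable hcont.aestronglyMeasurable]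
  rw [step1, integral_prod _ (integrable_exp_prod hm' hr₁ hmh' hr₂ hs.le),
    gamma_integral_eq hm' hr₁]
  -- pointwise rewriting of the outer integrand
  set D : ℝ := (1/Ω₁) ^ (m:ℝ) / Real.Gamma m * (k ^ ((m:ℝ)-1))⁻¹ with hD_def
  clear_value D
  have hpt : ∀ x ∈ Ioi (0:ℝ),
      ((1/Ω₁) ^ (m:ℝ) / Real.Gamma m * x ^ ((m:ℝ) - 1) * Real.exp (-(1/Ω₁ * x))) *
        (∫ y, Real.exp (s * (x * y)) ∂(gammaMeasure (mh:ℝ) (1/Ω₂)))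
      = D * ((k*x) ^ ((m:ℝ)-1) * (1+k*x) ^ (-(mh:ℝ)) * Real.exp (-z*(k*x))) := by
    intro x hx
    have hx0 : (0:ℝ) < x := hx
    have hsx : s * x < 0 := mul_neg_of_neg_of_pos hs hx0
    have hinner : ∫ y, Real.exp (s * (x * y)) ∂(gammaMeasure (mh:ℝ) (1/Ω₂))
        = ((1/Ω₂) / ((1/Ω₂) - s*x)) ^ (mh:ℝ) := by
      have h1 : ∀ y : ℝ, s * (x * y) = (s*x) * y := fun y => by ring
      simp_rw [h1]
      exact gamma_mgf hmh' hr₂ hsx.le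
    have h1k : 0 < 1 + k*x := by nlinarith
    have hd : (0:ℝ) < 1/Ω₂ - s*x := by nlinarith
    have hfrac : (1/Ω₂) / ((1/Ω₂) - s*x) = (1+k*x)⁻¹ := by
      rw [hk_def]
      rw [div_eq_iff hd.ne', inv_eq_one_div, div_mul_eq_mul_div, eq_div_iff (by nlinarith)]
      field_simp
      ring
    have hpow : ((1+k*x)⁻¹) ^ (mh:ℝ) = (1+k*x) ^ (-(mh:ℝ)) := by
      rw [Real.inv_rpow h1k.le, ← Real.rpow_neg h1k.le]
    have hmulr : (k*x) ^ ((m:ℝ)-1) = k ^ ((m:ℝ)-1) * x ^ ((m:ℝ)-1) :=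
      Real.mul_rpow hk.le hx0.le
    have hne : s*Ω₁*Ω₂ ≠ 0 := ne_of_lt (by nlinarith)
    have hexp : -z*(k*x) = -(1/Ω₁ * x) := by
      rw [hz_def, hk_def]
      field_simp
      rw [div_self hs.ne]
    rw [hinner, hfrac, hpow, hmulr, hexp, hD_def]
    exact alg_aux (Real.rpow_pos_of_pos hk _).ne'
  rw [setIntegral_congr_fun measurableSet_Ioi hpt, integral_const_mul,
    subs_Ioi (p := (m:ℝ)-1) (q := -(mh:ℝ)) (z := z) hk]
  -- RHS
  have ha' : ((m:ℝ) - mh)/2 - (-(((m:ℝ)+mh-1)/2)) + 1/2 = (m:ℝ) := by ring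
  rw [whittakerW, ha', tricomiU]
  have hq : 1 + 2*(((m:ℝ)-mh)/2) - (m:ℝ) - 1 = -(mh:ℝ) := by ring
  rw [hq]
  -- constants
  have hck : c = k * Ω₁ := by rw [hc_def, hk_def]; ring
  have hkk : k ^ ((m:ℝ)-1) * k = k ^ (m:ℝ) := by
    nth_rewrite 2 [← Real.rpow_one k]
    rw [← Real.rpow_add hk]
    norm_num
  have hE : Real.exp (-1 / (2*s*Ω₁*Ω₂)) * Real.exp (-c⁻¹/2) = 1 := by
    rw [← hz, ← Real.exp_add, show -1 / (2*s*Ω₁*Ω₂) + -z/2 = 0 by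
      rw [hz_def]; field_simp; ring]
    exact Real.exp_zero
  have hA : c ^ (((m:ℝ)+mh-1)/2) * c ^ (((m:ℝ)-mh)/2 + 1/2) = c ^ (m:ℝ) := by
    rw [← Real.rpow_add hc, show ((m:ℝ)+mh-1)/2 + (((m:ℝ)-mh)/2 + 1/2) = (m:ℝ) by ring]
  have hkm : (1/Ω₁) ^ (m:ℝ) * (k ^ (m:ℝ))⁻¹ = (c ^ (m:ℝ))⁻¹ := by
    rw [hck, Real.mul_rpow hk.le hΩ₁.le, one_div, Real.inv_rpow hΩ₁.le, mul_inv]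
    ring
  have left : D * k⁻¹ = (c ^ (m:ℝ))⁻¹ / Real.Gamma m := by
    rw [hD_def]
    have h2 : (1/Ω₁) ^ (m:ℝ) / Real.Gamma (m:ℝ) * (k ^ ((m:ℝ)-1))⁻¹ * k⁻¹
        = (1/Ω₁) ^ (m:ℝ) * (k ^ ((m:ℝ)-1) * k)⁻¹ / Real.Gamma (m:ℝ) := by
      rw [mul_inv]; ring
    rw [h2, hkk, hkm]
  have right : Real.exp (-1 / (2*s*Ω₁*Ω₂)) / c ^ (((m:ℝ)+mh-1)/2) *
        (Real.exp (-z/2) * z ^ (((m:ℝ)-mh)/2 + 1/2) * (1/Real.Gamma m))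
      = (c ^ (m:ℝ))⁻¹ / Real.Gamma m := by
    rw [hz, Real.inv_rpow hc.le]
    have h3 : Real.exp (-1 / (2*s*Ω₁*Ω₂)) / c ^ (((m:ℝ)+mh-1)/2) *
          (Real.exp (-c⁻¹/2) * (c ^ (((m:ℝ)-mh)/2 + 1/2))⁻¹ * (1/Real.Gamma m))
        = (Real.exp (-1 / (2*s*Ω₁*Ω₂)) * Real.exp (-c⁻¹/2)) *
            (c ^ (((m:ℝ)+mh-1)/2) * c ^ (((m:ℝ)-mh)/2 + 1/2))⁻¹ / Real.Gamma m := by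
      rw [mul_inv]; ring
    rw [h3, hE, hA, one_mul]
  have key : D * k⁻¹ = Real.exp (-1 / (2*s*Ω₁*Ω₂)) / c ^ (((m:ℝ)+mh-1)/2) *
      (Real.exp (-z/2) * z ^ (((m:ℝ)-mh)/2 + 1/2) * (1/Real.Gamma m)) :=
    left.trans right.symm
  rw [← mul_assoc, key]
  ring
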